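/- For every n > 3 and every r ∈ {2n, 2n+1, ..., 3n-1}, there exist tuples α, β ∈ (S_n)^n with N(α,β) = |{(α_i(j), β_j(i)) : 0 ≤ i,j ≤ n-1}| = r. -/

import Mathlib

open Matrix Kronecker

/-- The realignment (reshuffling) of a bipartite operator. -/
def realign {n m : ℕ} (X : Matrix (Fin n × Fin m) (Fin n × Fin m) ℂ) :
    Matrix (Fin n × Fin n) (Fin m × Fin m) ℂ :=
  Matrix.of fun p q => X (p.1, q.1) (p.2, q.2)

/-- The operator Schmidt rank of a bipartite operator, i.e. the rank
of its realignment. -/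
noncomputable def osr {n m : ℕ} (X : Matrix (Fin n × Fin m) (Fin n × Fin m) ℂ) : ℕ :=
  (realign X).rank

/-- The bipartite unitary associated to two tuples of permutations:
`U_{α,β} = Σ_{i,j} e_i e_j^* ⊗ e_{α_i(j)} e_{β_j(i)}^*`. -/
def permU {n : ℕ} (α β : Fin n → Equiv.Perm (Fin n)) :
    Matrix (Fin n × Fin n) (Fin n × Fin n) ℂ :=
  Matrix.of fun p q => if p.2 = α p.1 q.1 ∧ q.2 = β q.1 p.1 then 1 else 0

/-- `N(α,β) = |{(α_i(j), β_j(i)) : 0 ≤ i,j ≤ n-1}|`. -/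
def Npairs {n : ℕ} (α β : Fin n → Equiv.Perm (Fin n)) : ℕ :=
  (Finset.image (fun ij : Fin n × Fin n => ((α ij.1) ij.2, (β ij.2) ij.1))
    Finset.univ).card

namespace Stmt8Aux
open Finset

variable {n : ℕ}

lemma val1 (hn : 3 ≤ n) : (1 : Fin (n+1)).val = 1 := by
  rw [Fin.val_one']; exact Nat.mod_eq_of_lt (by omega)

open Fin.NatCast in
lemma val2 (hn : 3 ≤ n) : (2 : Fin (n+1)).val = 2 := by
  rw [show (2 : Fin (n+1)) = 1 + 1 from one_add_one_eq_two.symm, Fin.val_add, val1 hn]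
  exact Nat.mod_eq_of_lt (by omega)

open Fin.NatCast in
lemma val3 (hn : 3 ≤ n) : (3 : Fin (n+1)).val = 3 := by
  rw [show (3 : Fin (n+1)) = 2 + 1 from two_add_one_eq_three.symm, Fin.val_add, val1 hn, val2 hn]
  exact Nat.mod_eq_of_lt (by omega)

lemma one_ne (hn : 3 ≤ n) : (1 : Fin (n+1)) ≠ 0 := by
  intro h
  have := congrArg Fin.val h
  rw [val1 hn, Fin.val_zero] at this
  omega

lemma two_ne (hn : 3 ≤ n) : (2 : Fin (n+1)) ≠ 0 := by
  intro h
  have := congrArg Fin.val h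
  rw [val2 hn, Fin.val_zero] at this
  omega

lemma three_ne (hn : 3 ≤ n) : (3 : Fin (n+1)) ≠ 0 := by
  intro h
  have := congrArg Fin.val h
  rw [val3 hn, Fin.val_zero] at this
  omega

lemma one_ne_two (hn : 3 ≤ n) : (1 : Fin (n+1)) ≠ 2 := by
  intro h
  have := congrArg Fin.val h
  rw [val1 hn, val2 hn] at this
  omega

lemma one_le (hn : 3 ≤ n) {i : Fin (n+1)} (h : i ≠ 0) : (1 : Fin (n+1)) ≤ i := by
  have := Fin.pos_iff_ne_zero.mpr h
  rw [Fin.lt_def] at this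
  rw [Fin.le_def, val1 hn]
  rw [Fin.val_zero] at this; omega

/-- The first tuple of permutations. -/
def alph (n : ℕ) (i : Fin (n+1)) : Equiv.Perm (Fin (n+1)) :=
  Equiv.addLeft (if i = 0 then 1 else i)

/-- The second tuple of permutations. -/
def bet (n : ℕ) (π : Equiv.Perm (Fin (n+1))) (j : Fin (n+1)) : Equiv.Perm (Fin (n+1)) :=
  if j = 0 then π else Equiv.addLeft j

def T0 (n : ℕ) : Finset (Fin (n+1) × Fin (n+1)) :=
  Finset.image (fun x => (x, x)) Finset.univ

def T1 (n : ℕ) : Finset (Fin (n+1) × Fin (n+1)) :=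
  Finset.image (fun b => (b + 1, b)) ({0}ᶜ : Finset (Fin (n+1)))

def P (n : ℕ) (π : Equiv.Perm (Fin (n+1))) : Finset (Fin (n+1) × Fin (n+1)) :=
  Finset.image (fun i => ((if i = 0 then 1 else i), π i)) Finset.univ

lemma card_T0 : (T0 n).card = n + 1 := by
  rw [T0, Finset.card_image_of_injective _ (fun a b h => (Prod.mk.injEq _ _ _ _ ▸ h).1)]
  simp

lemma card_T1 : (T1 n).card = n := by
  rw [T1, Finset.card_image_of_injective _ (fun a b h => (Prod.mk.injEq _ _ _ _ ▸ h).2),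
    Finset.card_compl]
  simp

lemma disj01 (hn : 3 ≤ n) : Disjoint (T0 n) (T1 n) := by
  rw [Finset.disjoint_left]
  rintro p hp0 hp1
  simp only [T0, T1, mem_image, mem_compl, mem_singleton, mem_univ, true_and] at hp0 hp1
  obtain ⟨x, rfl⟩ := hp0
  obtain ⟨b, hb, h⟩ := hp1
  rw [Prod.mk.injEq] at h
  obtain ⟨h1, rfl⟩ := h
  exact one_ne hn (add_left_cancel (a := b) (by rwa [add_zero]))

lemma alph_apply (i j : Fin (n+1)) : alph n i j = (if i = 0 then 1 else i) + j := by
  rw [alph]; rfl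

lemma bet_apply (π : Equiv.Perm (Fin (n+1))) (j i : Fin (n+1)) :
    bet n π j i = if j = 0 then π i else j + i := by
  rw [bet]; split <;> rfl

lemma npairs_eq (hn : 3 ≤ n) (π : Equiv.Perm (Fin (n+1))) :
    Npairs (alph n) (bet n π) = (T0 n ∪ T1 n ∪ P n π).card := by
  rw [Npairs]
  congr 1
  apply Finset.ext
  rintro ⟨x, y⟩
  simp only [mem_image, mem_union, mem_univ, true_and, Prod.exists, T0, T1, P,
    mem_compl, mem_singleton, alph_apply, bet_apply]
  constructor
  · rintro ⟨i, j, h⟩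
    by_cases hj : j = 0
    · subst hj
      right
      refine ⟨i, ?_⟩
      simpa using h
    · by_cases hi : i = 0
      · subst hi
        left; right
        refine ⟨j, hj, ?_⟩
        rw [if_pos rfl, if_neg hj] at h
        rw [← h]
        simp [add_comm]
      · left; left
        refine ⟨i + j, ?_⟩
        rw [if_neg hi, if_neg hj] at h
        rw [← h]
        simp [add_comm]
  · rintro ((⟨v, hv⟩ | ⟨b, hb, hbv⟩) | ⟨i, hi⟩)
    · -- diagonal point (v, v)
      by_cases hv1 : v = 1
      · refine ⟨2, v - 2, ?_⟩
        have h2 : (2 : Fin (n+1)) ≠ 0 := two_ne hn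
        have hj : v - 2 ≠ 0 := fun hc => one_ne_two hn (hv1.symm.trans (sub_eq_zero.mp hc))
        rw [if_neg h2, if_neg hj, ← hv]
        simp only [Prod.mk.injEq]
        exact ⟨add_sub_cancel _ _, sub_add_cancel _ _⟩
      · refine ⟨1, v - 1, ?_⟩
        have h1 : (1 : Fin (n+1)) ≠ 0 := one_ne hn
        have hj : v - 1 ≠ 0 := fun hc => hv1 (sub_eq_zero.mp hc)
        rw [if_neg h1, if_neg hj, ← hv]
        simp only [Prod.mk.injEq]
        exact ⟨add_sub_cancel _ _, sub_add_cancel _ _⟩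
    · -- subdiagonal point (b+1, b), b ≠ 0
      refine ⟨0, b, ?_⟩
      rw [if_pos rfl, if_neg hb, ← hbv]
      simp only [Prod.mk.injEq]
      exact ⟨add_comm _ _, add_zero _⟩
    · -- column point
      refine ⟨i, 0, ?_⟩
      rw [if_pos rfl, add_zero]
      exact hi

def Pnew (n : ℕ) (s : Fin (n+1)) : Finset (Fin (n+1) × Fin (n+1)) :=
  Finset.image (fun i => (i, Fin.cycleRange s i)) (Finset.Icc 1 s)

lemma card_Pnew (hn : 3 ≤ n) (s : Fin (n+1)) : (Pnew n s).card = s.val := by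
  rw [Pnew, Finset.card_image_of_injOn (fun a _ b _ h => (Prod.mk.injEq _ _ _ _ ▸ h).1),
    Fin.card_Icc, val1 hn]
  omega

lemma mem_Icc_ne_zero (hn : 3 ≤ n) {s i : Fin (n+1)} (h : i ∈ Finset.Icc 1 s) : i ≠ 0 := by
  have h1 := (Finset.mem_Icc.mp h).1
  intro hc; subst hc
  rw [Fin.le_def, val1 hn, Fin.val_zero] at h1
  omega

lemma union_P_eq (hn : 3 ≤ n) (s : Fin (n+1)) (hs : 1 ≤ s.val) :
    T0 n ∪ T1 n ∪ P n (Fin.cycleRange s) = T0 n ∪ T1 n ∪ Pnew n s := by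
  apply Finset.Subset.antisymm
  · intro p hp
    rcases Finset.mem_union.mp hp with h | h
    · exact Finset.mem_union.mpr (Or.inl h)
    · simp only [P, mem_image, mem_univ, true_and] at h
      obtain ⟨i, rfl⟩ := h
      by_cases hi0 : i = 0
      · subst hi0
        apply Finset.mem_union_left
        apply Finset.mem_union_left
        rw [if_pos rfl]
        have h0s : (0 : Fin (n+1)) < s := by rw [Fin.lt_def, Fin.val_zero]; omega
        rw [Fin.cycleRange_of_lt h0s, zero_add]
        simp [T0]
      · by_cases his : i ≤ s
        · apply Finset.mem_union_right
          rw [Pnew, Finset.mem_image]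
          exact ⟨i, Finset.mem_Icc.mpr ⟨one_le hn hi0, his⟩, by rw [if_neg hi0]⟩
        · apply Finset.mem_union_left
          apply Finset.mem_union_left
          rw [if_neg hi0, Fin.cycleRange_of_gt (lt_of_not_ge his)]
          simp [T0]
  · intro p hp
    rcases Finset.mem_union.mp hp with h | h
    · exact Finset.mem_union_left _ h
    · apply Finset.mem_union_right
      rw [Pnew, Finset.mem_image] at h
      obtain ⟨i, hmem, rfl⟩ := h
      have hi0 : i ≠ 0 := mem_Icc_ne_zero hn hmem
      rw [P, Finset.mem_image]
      exact ⟨i, Finset.mem_univ _, by rw [if_neg hi0]⟩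

open Fin.NatCast in
lemma disj_Pnew (hn : 3 ≤ n) (s : Fin (n+1)) : Disjoint (T0 n ∪ T1 n) (Pnew n s) := by
  rw [Finset.disjoint_left]
  rintro p hp hpnew
  rw [Pnew, Finset.mem_image] at hpnew
  obtain ⟨i, hmem, rfl⟩ := hpnew
  obtain ⟨hi1, his⟩ := Finset.mem_Icc.mp hmem
  have hi0 : i ≠ 0 := mem_Icc_ne_zero hn hmem
  rcases Finset.mem_union.mp hp with h | h
  · simp only [T0, mem_image, mem_univ, true_and] at h
    obtain ⟨x, hx⟩ := h
    rw [Prod.mk.injEq] at hx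
    obtain ⟨rfl, hx2⟩ := hx
    rcases lt_or_eq_of_le his with hlt | heq
    · rw [Fin.cycleRange_of_lt hlt] at hx2
      exact one_ne hn (add_left_cancel (a := x) (by rw [add_zero, ← hx2]))
    · rw [Fin.cycleRange_of_eq heq] at hx2
      exact hi0 hx2
  · simp only [T1, mem_image, mem_compl, mem_singleton] at h
    obtain ⟨b, hb, hx⟩ := h
    rw [Prod.mk.injEq] at hx
    obtain ⟨hx1, hx2⟩ := hx
    rcases lt_or_eq_of_le his with hlt | heq
    · rw [Fin.cycleRange_of_lt hlt] at hx2
      -- hx1 : b + 1 = i, hx2 : b = i + 1, so i = i + 2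
      rw [hx2, add_assoc] at hx1
      exact two_ne hn (add_left_cancel (a := i) (by rw [add_zero]; exact (congrArg (i + ·) one_add_one_eq_two).symm.trans hx1))
    · rw [Fin.cycleRange_of_eq heq] at hx2
      exact hb hx2

lemma card_P2 (_hn : 3 ≤ n) : (P n (Equiv.addLeft (2 : Fin (n+1)))).card = n + 1 := by
  rw [P, Finset.card_image_of_injective _
    (fun a b h => add_left_cancel (a := (2 : Fin (n+1)))
      (show (2 : Fin (n+1)) + a = 2 + b from (Prod.mk.injEq _ _ _ _ ▸ h).2))]
  simp

open Fin.NatCast in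
lemma disj_P2 (hn : 3 ≤ n) : Disjoint (T0 n ∪ T1 n) (P n (Equiv.addLeft (2 : Fin (n+1)))) := by
  rw [Finset.disjoint_left]
  rintro p hp hpnew
  simp only [P, Finset.mem_image, mem_univ, true_and, Equiv.coe_addLeft] at hpnew
  obtain ⟨i, rfl⟩ := hpnew
  rcases Finset.mem_union.mp hp with h | h
  · simp only [T0, mem_image, mem_univ, true_and] at h
    obtain ⟨x, hx⟩ := h
    rw [Prod.mk.injEq] at hx
    obtain ⟨rfl, hx2⟩ := hx
    by_cases hi0 : i = 0
    · rw [if_pos hi0, hi0, add_zero] at hx2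
      exact one_ne_two hn hx2
    · rw [if_neg hi0] at hx2
      exact two_ne hn (add_right_cancel (b := i) (by rw [zero_add, ← hx2]))
  · simp only [T1, mem_image, mem_compl, mem_singleton] at h
    obtain ⟨b, hb, hx⟩ := h
    rw [Prod.mk.injEq] at hx
    obtain ⟨hx1, hx2⟩ := hx
    by_cases hi0 : i = 0
    · rw [if_pos hi0] at hx1
      rw [hi0, add_zero] at hx2
      -- b = 2, b + 1 = 1 → 2 + 1 = 1
      rw [hx2] at hx1
      have h3 : (3 : Fin (n+1)) = 1 := by rw [← hx1]; exact two_add_one_eq_three.symm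
      have := congrArg Fin.val h3
      rw [val3 hn, val1 hn] at this
      omega
    · rw [if_neg hi0] at hx1
      -- hx1 : b + 1 = i, hx2 : b = 2 + i → i = 2 + i + 1 = 3 + i
      rw [hx2, add_assoc, add_comm i 1, ← add_assoc] at hx1
      have h3 : (2 : Fin (n+1)) + 1 = 3 := two_add_one_eq_three
      rw [h3] at hx1
      exact three_ne hn (add_right_cancel (b := i) (by rw [zero_add, hx1]))

end Stmt8Aux

open Stmt8Aux in
theorem stmt8 (n r : ℕ) (hn : 3 < n) (h1 : 2 * n ≤ r) (h2 : r ≤ 3 * n - 1) :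
    ∃ α β : Fin n → Equiv.Perm (Fin n), Npairs α β = r := by
  obtain ⟨m, rfl⟩ : ∃ m, n = m + 1 := ⟨n - 1, by omega⟩
  have hm : 3 ≤ m := by omega
  by_cases hr : r ≤ 3 * m + 1
  · refine ⟨alph m, bet m (Fin.cycleRange ⟨r - 2 * m - 1, by omega⟩), ?_⟩
    rw [npairs_eq hm, union_P_eq hm _ (by simp; omega),
      Finset.card_union_of_disjoint (disj_Pnew hm _),
      Finset.card_union_of_disjoint (disj01 hm),
      card_T0, card_T1, card_Pnew hm]
    simp only []
    omega
  · refine ⟨alph m, bet m (Equiv.addLeft 2), ?_⟩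
    rw [npairs_eq hm,
      Finset.card_union_of_disjoint (disj_P2 hm),
      Finset.card_union_of_disjoint (disj01 hm),
      card_T0, card_T1, card_P2 hm]
    omega
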